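/- (Lemma 1) Let P ≥ 1, N ≥ 1, let H_0, …, H_{P-1} be N×N complex matrices, let h̃_0, …, h̃_{P-1} ∈ ℂ, let θ_0, …, θ_{P-1} ∈ ℝ, and set z_i = exp(−i·θ_i). Suppose the AF-domain channel matrix at symbol k is H_{AFD,k} = ∑_{i=0}^{P-1} h̃_i · z_i^k · H_i, and a fixed pilot vector x_p ∈ ℂ^N is transmitted on every symbol, so the noise-free received pilot is y_k = H_{AFD,k} · x_p. Then the sequence of received pilot vectors possesses a P-th order autoregressive property: there exist complex coefficients γ_0, …, γ_{P-1}, independent of the vector component index, such that y_{k+P} = γ_{P-1}·y_{k+P−1} + ⋯ + γ_0·y_k for every k ∈ ℕ. Moreover one may take γ_j = −β_j, where β_j are the coefficients of the monic polynomial ∏_{i=0}^{P-1}(X − z_i) = X^P + β_{P-1}X^{P-1} + ⋯ + β_0. -/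
import Mathlib


open Polynomial Finset Matrix

/-- Lemma 1: In the AF domain, with channel matrices
`H_{AFD,k} = ∑ i, h̃ i * z i ^ k • H i` (where `z i = exp(-θ i * I)`), the noise-free
received pilot vectors `y k = H_{AFD,k} ⬝ x_p` (for a fixed pilot `x_p` sent on every symbol)
possess a `P`-th order autoregressive property: there exist coefficients `γ_0, …, γ_{P-1}`,
independent of the vector component index, with `y (k+P) = ∑ j < P, γ j • y (k+j)` for all `k`;
moreover one may take `γ j = -β j` where the `β j` are the coefficients of the monic polynomial
`∏ i, (X - z i)`. -/
theorem received_pilot_sequence_autoregressive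
    (P N : ℕ) (hP : 1 ≤ P) (hN : 1 ≤ N)
    (H : Fin P → Matrix (Fin N) (Fin N) ℂ)
    (h : Fin P → ℂ) (θ : Fin P → ℝ)
    (z : Fin P → ℂ) (hz : ∀ i, z i = Complex.exp (-(θ i : ℂ) * Complex.I))
    (HAFD : ℕ → Matrix (Fin N) (Fin N) ℂ)
    (hHAFD : ∀ k, HAFD k = ∑ i : Fin P, (h i * z i ^ k) • H i)
    (xp : Fin N → ℂ)
    (y : ℕ → (Fin N → ℂ)) (hy : ∀ k, y k = (HAFD k).mulVec xp) :
    ∃ γ : ℕ → ℂ,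
      (∀ j, γ j = -((∏ i : Fin P, (X - C (z i))).coeff j)) ∧
      ∀ k : ℕ, y (k + P) = ∑ j ∈ Finset.range P, γ j • y (k + j) := by
  set p : ℂ[X] := ∏ i : Fin P, (X - C (z i)) with hp
  refine ⟨fun j => -(p.coeff j), fun j => rfl, ?_⟩
  have hmonic : p.Monic := monic_prod_of_monic _ _ fun i _ => monic_X_sub_C _
  have hdeg : p.natDegree = P := by
    rw [hp, natDegree_prod _ _ fun i _ => X_sub_C_ne_zero _]
    simp
  have hroot : ∀ i : Fin P,
      z i ^ P = ∑ j ∈ Finset.range P, (-(p.coeff j)) * z i ^ j := by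
    intro i
    have h0 : p.eval (z i) = 0 := by
      rw [hp, eval_prod]
      exact Finset.prod_eq_zero (Finset.mem_univ i) (by simp)
    have he := Polynomial.eval_eq_sum_range (x := z i) (p := p)
    rw [hdeg, Finset.sum_range_succ, h0] at he
    have hcP : p.coeff P = 1 := by
      have := hmonic.coeff_natDegree
      rwa [hdeg] at this
    rw [hcP, one_mul] at he
    have : z i ^ P = -∑ j ∈ Finset.range P, p.coeff j * z i ^ j := by
      linear_combination -he
    rw [this, ← Finset.sum_neg_distrib]
    exact Finset.sum_congr rfl fun j _ => by ring
  have hyv : ∀ k, y k = ∑ i : Fin P, (h i * z i ^ k) • ((H i).mulVec xp) := by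
    intro k
    rw [hy, hHAFD]
    funext m
    simp only [Matrix.mulVec, dotProduct, Finset.sum_apply, Matrix.sum_apply, Pi.smul_apply, Matrix.smul_apply,
      smul_eq_mul, Finset.sum_mul, Finset.mul_sum]
    rw [Finset.sum_comm]
    exact Finset.sum_congr rfl fun i _ => Finset.sum_congr rfl fun n _ => by ring
  intro k
  rw [hyv]
  have : ∀ i : Fin P, (h i * z i ^ (k + P)) • ((H i).mulVec xp)
      = ∑ j ∈ Finset.range P, ((-(p.coeff j)) * (h i * z i ^ (k + j))) • ((H i).mulVec xp) := by
    intro i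
    rw [← Finset.sum_smul]
    congr 1
    rw [pow_add, hroot i, Finset.mul_sum, Finset.mul_sum]
    exact Finset.sum_congr rfl fun j _ => by rw [pow_add]; ring
  rw [Finset.sum_congr rfl fun i _ => this i, Finset.sum_comm]
  refine Finset.sum_congr rfl fun j _ => ?_
  rw [hyv, Finset.smul_sum]
  exact Finset.sum_congr rfl fun i _ => by rw [mul_smul]
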